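/- Let u₁, …, u_d be an orthonormal basis of ℝ^d, let λ₁, …, λ_d ≥ 0, let μ ∈ ℝ^d, and let σ : ℝ → ℝ be differentiable with σ(t) > 0 for all t. Define the Gaussian denoiser D_G(z; s) = μ + ∑_{i=1}^d (λᵢ/(λᵢ + s²)) ⟨uᵢ, z − μ⟩ uᵢ. Fix T ∈ ℝ and x_T ∈ ℝ^d, and define x(t) = μ + ∑_{i=1}^d √((σ(t)² + λᵢ)/(σ(T)² + λᵢ)) ⟨uᵢ, x_T − μ⟩ uᵢ. Then x(T) = x_T, and for every t ∈ ℝ the function x is differentiable at t with derivative x′(t) = (σ′(t)/σ(t))·(x(t) − D_G(x(t); σ(t))); that is, x(t) is the closed-form solution of the probability-flow ODE dx/dt = −σ̇(t)σ(t)∇_x log p(x; σ(t)) for the multivariate Gaussian data distribution with mean μ and covariance ∑ᵢ λᵢ uᵢuᵢᵀ. -/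

import Mathlib

open scoped RealInnerProductSpace

/-- The Gaussian denoiser at noise level `s` for the Gaussian distribution with mean `μ` and
covariance `∑ᵢ λᵢ uᵢuᵢᵀ`: `D_G(z; s) = μ + ∑ᵢ (λᵢ/(λᵢ + s²)) ⟨uᵢ, z − μ⟩ uᵢ`. -/
noncomputable def gaussianDenoiser {d : ℕ}
    (u : OrthonormalBasis (Fin d) ℝ (EuclideanSpace ℝ (Fin d)))
    (lam : Fin d → ℝ) (μ : EuclideanSpace ℝ (Fin d))
    (z : EuclideanSpace ℝ (Fin d)) (s : ℝ) : EuclideanSpace ℝ (Fin d) :=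
  μ + ∑ i, ((lam i / (lam i + s ^ 2)) * ⟪u i, z - μ⟫) • u i

/-- The closed-form trajectory
`x(t) = μ + ∑ᵢ √((σ(t)² + λᵢ)/(σ(T)² + λᵢ)) ⟨uᵢ, x_T − μ⟩ uᵢ`. -/
noncomputable def gaussianTrajectory {d : ℕ}
    (u : OrthonormalBasis (Fin d) ℝ (EuclideanSpace ℝ (Fin d)))
    (lam : Fin d → ℝ) (μ : EuclideanSpace ℝ (Fin d)) (σ : ℝ → ℝ) (T : ℝ)
    (xT : EuclideanSpace ℝ (Fin d)) (t : ℝ) : EuclideanSpace ℝ (Fin d) :=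
  μ + ∑ i, (Real.sqrt ((σ t ^ 2 + lam i) / (σ T ^ 2 + lam i)) * ⟪u i, xT - μ⟫) • u i

/-- The trajectory `x(t)` satisfies `x(T) = x_T` and solves the
probability-flow ODE `x′(t) = (σ′(t)/σ(t))(x(t) − D_G(x(t); σ(t)))` for the multivariate
Gaussian data distribution with mean `μ` and covariance `∑ᵢ λᵢ uᵢuᵢᵀ`. -/
theorem gaussian_probability_flow_ode_closed_form
    (d : ℕ) (u : OrthonormalBasis (Fin d) ℝ (EuclideanSpace ℝ (Fin d)))
    (lam : Fin d → ℝ) (hlam : ∀ i, 0 ≤ lam i)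
    (μ : EuclideanSpace ℝ (Fin d))
    (σ σ' : ℝ → ℝ) (hσ : ∀ t, HasDerivAt σ (σ' t) t) (hσpos : ∀ t, 0 < σ t)
    (T : ℝ) (xT : EuclideanSpace ℝ (Fin d)) :
    gaussianTrajectory u lam μ σ T xT T = xT ∧
      ∀ t, HasDerivAt (gaussianTrajectory u lam μ σ T xT)
        ((σ' t / σ t) •
          (gaussianTrajectory u lam μ σ T xT t -
            gaussianDenoiser u lam μ (gaussianTrajectory u lam μ σ T xT t) (σ t))) t := by
  have hA : ∀ i, 0 < σ T ^ 2 + lam i := fun i => by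
    have := hσpos T; have := hlam i; positivity
  constructor
  · unfold gaussianTrajectory
    have h1 : ∀ i : Fin d, Real.sqrt ((σ T ^ 2 + lam i) / (σ T ^ 2 + lam i)) = 1 := fun i => by
      rw [div_self (hA i).ne', Real.sqrt_one]
    simp only [h1, one_mul]
    rw [u.sum_repr' (xT - μ)]
    abel
  · intro t
    have hf : ∀ i, 0 < σ t ^ 2 + lam i := fun i => by
      have := hσpos t; have := hlam i; positivity
    have hg : ∀ i, 0 < (σ t ^ 2 + lam i) / (σ T ^ 2 + lam i) := fun i =>
      div_pos (hf i) (hA i)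
    set a : Fin d → ℝ := fun i => ⟪u i, xT - μ⟫ with ha
    set c : Fin d → ℝ → ℝ := fun i s => Real.sqrt ((σ s ^ 2 + lam i) / (σ T ^ 2 + lam i)) with hc
    -- derivative of each coefficient
    have hcd : ∀ i, HasDerivAt (c i)
        ((2 * σ t * σ' t / (σ T ^ 2 + lam i)) * (1 / (2 * c i t))) t := by
      intro i
      have hpoly : HasDerivAt (fun s => (σ s ^ 2 + lam i) / (σ T ^ 2 + lam i))
          (2 * σ t * σ' t / (σ T ^ 2 + lam i)) t := by
        have := (((hσ t).pow 2).add_const (lam i)).div_const (σ T ^ 2 + lam i)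
        simpa [mul_comm, mul_assoc, mul_left_comm] using this
      have := (Real.hasDerivAt_sqrt (hg i).ne').comp t hpoly
      simpa [hc, mul_comm, Function.comp_def] using this
    -- inner products with trajectory
    have hinner : ∀ i, ⟪u i, gaussianTrajectory u lam μ σ T xT t - μ⟫ = c i t * a i := by
      intro i
      unfold gaussianTrajectory
      rw [add_sub_cancel_left, inner_sum]
      simp only [real_inner_smul_right]
      rw [Finset.sum_eq_single i]
      · rw [orthonormal_iff_ite.mp u.orthonormal i i]; simp [hc, ha]
      · intro j _ hj
        rw [orthonormal_iff_ite.mp u.orthonormal i j]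
        simp [hj.symm]
      · simp
    have key : HasDerivAt (gaussianTrajectory u lam μ σ T xT)
        (∑ i, ((2 * σ t * σ' t / (σ T ^ 2 + lam i)) * (1 / (2 * c i t)) * a i) • u i) t := by
      have hsum : HasDerivAt (fun s => ∑ i, (c i s * a i) • u i)
          (∑ i, ((2 * σ t * σ' t / (σ T ^ 2 + lam i)) * (1 / (2 * c i t)) * a i) • u i) t :=
        HasDerivAt.fun_sum fun i _ => ((hcd i).mul_const (a i)).smul_const (u i)
      have := hsum.const_add μ
      exact this
    convert key using 1
    unfold gaussianDenoiser
    have hxd : gaussianTrajectory u lam μ σ T xT t -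
        (μ + ∑ i, ((lam i / (lam i + σ t ^ 2)) * ⟪u i, gaussianTrajectory u lam μ σ T xT t - μ⟫) • u i)
        = ∑ i, ((σ t ^ 2 / (lam i + σ t ^ 2)) * (c i t * a i)) • u i := by
      simp only [hinner]
      rw [gaussianTrajectory, add_sub_add_left_eq_sub, ← Finset.sum_sub_distrib]
      refine Finset.sum_congr rfl fun i _ => ?_
      rw [← sub_smul]
      congr 1
      have h2 : 0 < lam i + σ t ^ 2 := by have := hσpos t; have := hlam i; positivity
      have hr : Real.sqrt ((σ t ^ 2 + lam i) / (σ T ^ 2 + lam i)) * ⟪u i, xT - μ⟫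
          = c i t * a i := rfl
      rw [hr]
      field_simp
      ring
    rw [hxd, Finset.smul_sum]
    refine Finset.sum_congr rfl fun i _ => ?_
    rw [smul_smul]
    congr 1
    have hct : 0 < c i t := Real.sqrt_pos.mpr (hg i)
    have hcsq : c i t * c i t = (σ t ^ 2 + lam i) / (σ T ^ 2 + lam i) :=
      Real.mul_self_sqrt (hg i).le
    have h2 : 0 < lam i + σ t ^ 2 := by have := hσpos t; have := hlam i; positivity
    have hσt := hσpos t
    have hcsq2 : c i t * c i t * (σ T ^ 2 + lam i) = σ t ^ 2 + lam i := by
      rw [hcsq, div_mul_cancel₀ _ (hA i).ne']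
    field_simp [hσt.ne', hct.ne', h2.ne', (hA i).ne']
    linear_combination (σ' t * a i) * hcsq2
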